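/- Let r^(1),...,r^(ρ) ∈ (0,1)^d be incomparable points with no coordinate ties and record-setting region S. Then S equals the union, over all ordered partitions Π = (Π_1,...,Π_d) of [ρ] into d (possibly empty) blocks, of the closed positive orthants O⁺(R_1^(Π_1),...,R_d^(Π_d)), where R_j^(P) := max_{i∈P} r^(i)_j (with max over the empty set equal to 0). -/
import Mathlib


open Set

/-- The record-setting region of the points `r 0, …, r (ρ-1)` within `[0,1)^d`. -/
def recordSet {d ρ : ℕ} (r : Fin ρ → Fin d → ℝ) : Set (Fin d → ℝ) :=
  {x | (∀ j, x j ∈ Set.Ico (0:ℝ) 1) ∧ ∀ i, ¬ ∀ j, x j < r i j}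

theorem recordSet_eq_union_over_partitions (d ρ : ℕ)
    (r : Fin ρ → Fin d → ℝ)
    (hr : ∀ i j, r i j ∈ Set.Ioo (0:ℝ) 1)
    (hties : ∀ j : Fin d, Function.Injective (fun i => r i j))
    (hinc : ∀ i i' : Fin ρ, i ≠ i' → ¬ r i ≤ r i') :
    recordSet r =
      ⋃ k : Fin ρ → Fin d,
        {y : Fin d → ℝ | (∀ j, y j ∈ Set.Ico (0:ℝ) 1) ∧
          ∀ j : Fin d, (⨆ i ∈ {i : Fin ρ | k i = j}, r i j) ≤ y j} := by
  ext x
  constructor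
  · rintro ⟨hbox, hrec⟩
    have hex : ∀ i, ∃ j, r i j ≤ x j := by
      intro i
      have := hrec i
      push_neg at this
      obtain ⟨j, hj⟩ := this
      exact ⟨j, hj⟩
    choose k hk using hex
    refine Set.mem_iUnion.2 ⟨k, hbox, fun j => ?_⟩
    refine Real.iSup_le (fun i => Real.iSup_le (fun hij => ?_) (hbox j).1) (hbox j).1
    have : k i = j := hij
    exact this ▸ hk i
  · intro hx
    obtain ⟨k, hbox, hsup⟩ := Set.mem_iUnion.1 hx
    refine ⟨hbox, fun i hall => ?_⟩
    have h1 : r i (k i) ≤ x (k i) := by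
      refine le_trans ?_ (hsup (k i))
      have hb : BddAbove (Set.range fun i' => ⨆ _ : i' ∈ {i' : Fin ρ | k i' = k i}, r i' (k i)) :=
        Finite.bddAbove_range _
      refine le_trans ?_ (le_ciSup hb i)
      rw [ciSup_pos (show i ∈ {i' : Fin ρ | k i' = k i} from rfl)]
    exact absurd (hall (k i)) (not_lt.2 h1)
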